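/- Let q be a prime power, n ≥ 1, c ∈ F_q \ {1}, and let f_1, …, f_n : F_q → F_q each be perfect c-nonlinear. Let β_1, …, β_n be a basis of F_{q^n} over F_q with coordinate maps L_k. Then F(x) = Σ_{k=1}^n β_k f_k(L_k(x)) is perfect c-nonlinear on F_{q^n}. -/

import Mathlib

/-- if `f 1, …, f n : 𝔽_q → 𝔽_q` are all perfect c-nonlinear (`c ≠ 1`), then
`F(x) = ∑ k, f k (B.repr x k) • B k` is perfect c-nonlinear on `𝔽_{q^n}`. -/
theorem stmt_7 (n : ℕ) (hn : 1 ≤ n) (K L : Type*) [Field K] [Field L]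
    [Fintype K] [Fintype L] [Algebra K L] (B : Module.Basis (Fin n) K L)
    (c : K) (hc : c ≠ 1)
    (f : Fin n → K → K)
    (hpcn : ∀ (k : Fin n) (a : K), Function.Bijective (fun x : K => f k (x + a) - c * f k x))
    (F : L → L) (hF : ∀ x : L, F x = ∑ k, f k (B.repr x k) • B k) :
    ∀ a : L, Function.Bijective (fun x : L => F (x + a) - c • F x) := by
  intro a
  set e : ∀ k : Fin n, K ≃ K := fun k => Equiv.ofBijective _ (hpcn k (B.repr a k)) with he
  have key : (fun x : L => F (x + a) - c • F x)
      = fun x => B.equivFun.symm (fun k => (e k) (B.equivFun x k)) := by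
    funext x
    rw [hF, hF, Module.Basis.equivFun_symm_apply, Finset.smul_sum, ← Finset.sum_sub_distrib]
    refine Finset.sum_congr rfl fun k _ => ?_
    simp [he, Equiv.ofBijective, smul_smul, sub_smul, map_add]
  rw [key]
  exact B.equivFun.symm.bijective.comp
    ((Equiv.piCongrRight e).bijective.comp B.equivFun.bijective)
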